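/- Let B and C be orthogonal projection operators on ℝ^N, and let x be a nonzero vector with ‖Bx‖₂/‖x‖₂ = a and ‖Cx‖₂/‖x‖₂ = b, where 0 ≤ a, b ≤ 1. Then arccos(a) + arccos(b) ≥ arccos(σ_max(BC)), where σ_max(BC) denotes the largest singular value of the product BC. -/

import Mathlib

open Matrix RealInnerProductSpace

private lemma selfadj_of_isSymm {N : ℕ} {B : Matrix (Fin N) (Fin N) ℝ} (h : B.IsSymm)
    (u v : EuclideanSpace ℝ (Fin N)) :
    ⟪(toEuclideanCLM (𝕜 := ℝ) B) u, v⟫ = ⟪u, (toEuclideanCLM (𝕜 := ℝ) B) v⟫ := by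
  have hH : B.IsHermitian := by
    rwa [Matrix.IsHermitian, Matrix.conjTranspose_eq_transpose_of_trivial]
  have := (Matrix.isHermitian_iff_isSymmetric.mp hH) u v
  simpa [← Matrix.coe_toEuclideanCLM_eq_toEuclideanLin] using this

/-- Uncertainty principle for graph signals (Tsitsvero et al.): if `B` and `C` are orthogonal
projections on `ℝ^N`, `x ≠ 0` has graph-domain concentration `‖Bx‖/‖x‖ = a` and spectral
concentration `‖Cx‖/‖x‖ = b` with `0 ≤ a, b ≤ 1`, then
`arccos a + arccos b ≥ arccos (σ_max (B C))`. -/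
theorem graph_uncertainty_principle
    {N : ℕ} (B C : Matrix (Fin N) (Fin N) ℝ)
    (hBsymm : B.IsSymm) (hBidem : B * B = B)
    (hCsymm : C.IsSymm) (hCidem : C * C = C)
    (x : EuclideanSpace ℝ (Fin N)) (hx : x ≠ 0)
    (a b : ℝ) (ha0 : 0 ≤ a) (ha1 : a ≤ 1) (hb0 : 0 ≤ b) (hb1 : b ≤ 1)
    (haB : ‖Matrix.toEuclideanCLM (𝕜 := ℝ) B x‖ / ‖x‖ = a)
    (hbC : ‖Matrix.toEuclideanCLM (𝕜 := ℝ) C x‖ / ‖x‖ = b) :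
    Real.arccos a + Real.arccos b ≥
      Real.arccos ‖Matrix.toEuclideanCLM (𝕜 := ℝ) (B * C)‖ := by
  set T := toEuclideanCLM (𝕜 := ℝ) B with hTdef
  set S := toEuclideanCLM (𝕜 := ℝ) C with hSdef
  set σ : ℝ := ‖toEuclideanCLM (𝕜 := ℝ) (B * C)‖ with hσdef
  have hσ0 : (0:ℝ) ≤ σ := norm_nonneg _
  -- key inequality
  have key : a * b - Real.sqrt (1 - a^2) * Real.sqrt (1 - b^2) ≤ σ := by
    rcases eq_or_lt_of_le ha0 with ha | ha
    · have : 0 ≤ Real.sqrt (1 - a^2) * Real.sqrt (1 - b^2) :=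
        mul_nonneg (Real.sqrt_nonneg _) (Real.sqrt_nonneg _)
      nlinarith
    rcases eq_or_lt_of_le hb0 with hb | hb
    · have : 0 ≤ Real.sqrt (1 - a^2) * Real.sqrt (1 - b^2) :=
        mul_nonneg (Real.sqrt_nonneg _) (Real.sqrt_nonneg _)
      nlinarith
    have hxn : ‖x‖ ≠ 0 := norm_ne_zero_iff.mpr hx
    have hTx : ‖T x‖ = a * ‖x‖ := by
      field_simp at haB; linarith [haB]
    have hSx : ‖S x‖ = b * ‖x‖ := by
      field_simp at hbC; linarith [hbC]
    have hTxpos : 0 < ‖T x‖ := by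
      rw [hTx]; positivity
    have hSxpos : 0 < ‖S x‖ := by
      rw [hSx]; positivity
    set x₀ : EuclideanSpace ℝ (Fin N) := ‖x‖⁻¹ • x with hx₀def
    set u : EuclideanSpace ℝ (Fin N) := ‖T x‖⁻¹ • T x with hudef
    set v : EuclideanSpace ℝ (Fin N) := ‖S x‖⁻¹ • S x with hvdef
    have hnx₀ : ‖x₀‖ = 1 := norm_smul_inv_norm hx
    have hnu : ‖u‖ = 1 := norm_smul_inv_norm (norm_pos_iff.mp hTxpos)
    have hnv : ‖v‖ = 1 := norm_smul_inv_norm (norm_pos_iff.mp hSxpos)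
    -- idempotence at the level of operators
    have hTT : ∀ y, T (T y) = T y := by
      intro y
      have : T * T = T := by rw [hTdef, ← _root_.map_mul, hBidem]
      exact DFunLike.congr_fun this y
    have hSS : ∀ y, S (S y) = S y := by
      intro y
      have : S * S = S := by rw [hSdef, ← _root_.map_mul, hCidem]
      exact DFunLike.congr_fun this y
    have hT := selfadj_of_isSymm hBsymm
    have hS := selfadj_of_isSymm hCsymm
    -- ⟪x, T x⟫ = ‖T x‖ ^ 2
    have hinT : ⟪x, T x⟫ = ‖T x‖ ^ 2 := by
      have h1 : ⟪x, T x⟫ = ⟪x, T (T x)⟫ := by rw [hTT]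
      rw [h1, ← hT x (T x), real_inner_self_eq_norm_sq]
    have hinS : ⟪x, S x⟫ = ‖S x‖ ^ 2 := by
      have h1 : ⟪x, S x⟫ = ⟪x, S (S x)⟫ := by rw [hSS]
      rw [h1, ← hS x (S x), real_inner_self_eq_norm_sq]
    have A1 : ⟪x₀, u⟫ = a := by
      rw [hx₀def, hudef, real_inner_smul_left, real_inner_smul_right, hinT, hTx]
      field_simp
    have A2 : ⟪x₀, v⟫ = b := by
      rw [hx₀def, hvdef, real_inner_smul_left, real_inner_smul_right, hinS, hSx]
      field_simp
    have hTu : T u = u := by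
      rw [hudef, _root_.map_smul, hTT]
    have hSv : S v = v := by
      rw [hvdef, _root_.map_smul, hSS]
    have A3 : ⟪u, v⟫ ≤ σ := by
      have h1 : ⟪u, v⟫ = ⟪u, (toEuclideanCLM (𝕜 := ℝ) (B * C)) v⟫ := by
        have h2 : (toEuclideanCLM (𝕜 := ℝ) (B * C)) v = T (S v) := by
          rw [_root_.map_mul]; rfl
        rw [h2, hSv, ← hT u v, hTu]
      calc ⟪u, v⟫ = ⟪u, (toEuclideanCLM (𝕜 := ℝ) (B * C)) v⟫ := h1
        _ ≤ ‖u‖ * ‖(toEuclideanCLM (𝕜 := ℝ) (B * C)) v‖ := real_inner_le_norm _ _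
        _ ≤ ‖u‖ * (σ * ‖v‖) := by
            gcongr
            exact ContinuousLinearMap.le_opNorm _ v
        _ = σ := by rw [hnu, hnv]; ring
    -- lower bound on ⟪u, v⟫
    have hnu' : ‖u - a • x₀‖ = Real.sqrt (1 - a^2) := by
      have huax : ⟪u, a • x₀⟫ = a * a := by
        rw [real_inner_smul_right, real_inner_comm, A1]
      have h2 : ‖u - a • x₀‖^2 = 1 - a^2 := by
        rw [norm_sub_sq_real, huax, hnu, norm_smul, hnx₀]
        rw [Real.norm_eq_abs, abs_of_nonneg ha0]
        ring
      rw [← h2, Real.sqrt_sq (norm_nonneg _)]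
    have hnv' : ‖v - b • x₀‖ = Real.sqrt (1 - b^2) := by
      have hvbx : ⟪v, b • x₀⟫ = b * b := by
        rw [real_inner_smul_right, real_inner_comm, A2]
      have h2 : ‖v - b • x₀‖^2 = 1 - b^2 := by
        rw [norm_sub_sq_real, hvbx, hnv, norm_smul, hnx₀]
        rw [Real.norm_eq_abs, abs_of_nonneg hb0]
        ring
      rw [← h2, Real.sqrt_sq (norm_nonneg _)]
    have A4 : ⟪u - a • x₀, v - b • x₀⟫ = ⟪u, v⟫ - a * b := by
      have e1 : ⟪u, x₀⟫ = a := by rw [real_inner_comm]; exact A1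
      have e3 : ⟪x₀, x₀⟫ = (1:ℝ) := by
        rw [real_inner_self_eq_norm_sq, hnx₀]; norm_num
      simp only [inner_sub_left, inner_sub_right, real_inner_smul_left, real_inner_smul_right]
      rw [e1, A2, e3]
      ring
    have habs := abs_real_inner_le_norm (u - a • x₀) (v - b • x₀)
    rw [hnu', hnv'] at habs
    have hneg := neg_abs_le (⟪u - a • x₀, v - b • x₀⟫)
    rw [A4] at hneg habs
    linarith
  -- finish via arccos
  have hs0 : 0 ≤ Real.arccos a + Real.arccos b :=
    add_nonneg (Real.arccos_nonneg _) (Real.arccos_nonneg _)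
  by_cases hs : Real.arccos a + Real.arccos b ≤ Real.pi
  · have hcos : Real.cos (Real.arccos a + Real.arccos b)
        = a * b - Real.sqrt (1 - a^2) * Real.sqrt (1 - b^2) := by
      rw [Real.cos_add, Real.cos_arccos (by linarith) ha1, Real.cos_arccos (by linarith) hb1,
        Real.sin_arccos, Real.sin_arccos]
    have hle : Real.cos (Real.arccos a + Real.arccos b) ≤ σ := by rw [hcos]; exact key
    have harc : ∀ t : ℝ, Real.arccos t = Real.pi / 2 - Real.arcsin t := fun t => rfl
    have h2 := Real.monotone_arcsin hle
    have h1 : Real.arccos σ ≤ Real.arccos (Real.cos (Real.arccos a + Real.arccos b)) := by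
      rw [harc σ, harc (Real.cos (Real.arccos a + Real.arccos b))]
      linarith
    rw [Real.arccos_cos hs0 hs] at h1
    exact h1
  · push_neg at hs
    have := Real.arccos_le_pi σ
    linarith
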